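/- arXiv:2404.13427 — 4 statements merged into one kernel-verified Lean document; each statement's English description precedes it below -/
import Mathlib

section
/- Let g be a real-valued continuous compactly supported function on (0,∞), h(x) = ∫_0^∞ g(xy)g(y) dy, and define the convolution operator on L²((0,∞), dx/x) by (V(h)F)(x) = ∫_0^∞ h(x/λ) √(x/λ) F(λ) dλ/λ. Then V(h) is a positive operator: ⟨V(h)F, F⟩ ≥ 0 for all F in L²((0,∞), dx/x). -/
open MeasureTheory Set
open scoped ENNReal NNReal

/-- The multiplicative Haar measure `dx/x` on `(0,∞)`. -/
noncomputable def mulHaar : Measure ℝ :=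
  (volume.restrict (Set.Ioi (0:ℝ))).withDensity fun x => ENNReal.ofReal x⁻¹

private lemma nu_ac : (MeasureTheory.volume.restrict (Set.Ioi (0:ℝ))) ≪ mulHaar := by
  refine Measure.AbsolutelyContinuous.mk fun A hA h0 => ?_
  have hm : Measurable fun x : ℝ => ENNReal.ofReal x⁻¹ := measurable_inv.ennreal_ofReal
  rw [mulHaar, withDensity_apply _ hA, Measure.restrict_restrict hA,
    lintegral_eq_zero_iff hm] at h0
  have h2 : ∀ᵐ x ∂(volume.restrict (A ∩ Set.Ioi 0)), ENNReal.ofReal x⁻¹ = 0 := by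
    filter_upwards [h0] with x hx using by simpa using hx
  rw [ae_iff, Measure.restrict_apply' (hA.inter measurableSet_Ioi)] at h2
  rw [Measure.restrict_apply hA]
  refine measure_mono_null (fun x hx => ?_) h2
  exact ⟨(ENNReal.ofReal_pos.mpr (inv_pos.mpr (Set.mem_Ioi.mp hx.2))).ne', hx⟩

/-- The convolution operator `V(h)` associated to `h(x) = ∫_0^∞ g(xy) g(y) dy` is a positive
operator on `L²((0,∞), dx/x)`:  `⟨V(h)F, F⟩ ≥ 0`. -/
theorem stmt3 (g : ℝ → ℝ) (hg : Continuous g) (hgc : HasCompactSupport g)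
    (hgs : tsupport g ⊆ Set.Ioi 0)
    (h : ℝ → ℝ) (hh : ∀ x, h x = ∫ y in Set.Ioi (0:ℝ), g (x * y) * g y)
    (F : ℝ → ℝ) (hF : MemLp F 2 mulHaar) :
    0 ≤ ∫ x in Set.Ioi (0:ℝ),
        (∫ l in Set.Ioi (0:ℝ), h (x / l) * Real.sqrt (x / l) * F l / l) * F x / x := by
  obtain ⟨M, hM⟩ := hg.bounded_above_of_compact_support hgc
  obtain ⟨a, b, ha, hab, hsub⟩ : ∃ a b : ℝ, 0 < a ∧ a ≤ b ∧ tsupport g ⊆ Set.Icc a b := by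
    rcases Set.eq_empty_or_nonempty (tsupport g) with he | hne
    · exact ⟨1, 1, one_pos, le_rfl, by rw [he]; exact Set.empty_subset _⟩
    · refine ⟨sInf (tsupport g), sSup (tsupport g), hgs (hgc.sInf_mem hne), ?_,
        fun x hx => ⟨csInf_le hgc.bddBelow hx, le_csSup hgc.bddAbove hx⟩⟩
      exact csInf_le_csSup hne hgc.bddBelow hgc.bddAbove
  have hM0 : 0 ≤ M := le_trans (norm_nonneg _) (hM 0)
  -- measurable representative of F
  have hFm := hF.1
  set F' : ℝ → ℝ := hFm.mk F with hF'def
  have hF'meas : Measurable F' := hFm.stronglyMeasurable_mk.measurable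
  have hFF'haar : F =ᵐ[mulHaar] F' := hFm.ae_eq_mk
  have hFF' : F =ᵐ[volume.restrict (Set.Ioi (0:ℝ))] F' := nu_ac.ae_eq hFF'haar
  -- basic functions
  set q : ℝ → ℝ := fun t => F' t / Real.sqrt t with hqdef
  set W : ℝ → ℝ → ℝ := fun t y => g (t * y) * q t with hWdef
  set J : ℝ → ℝ → ℝ≥0∞ := fun t y => (Set.Icc a b).indicator (fun _ => (1:ℝ≥0∞)) (t * y)
    with hJdef
  have hgm : Measurable g := hg.measurable
  have hqm : Measurable q := hF'meas.div Real.continuous_sqrt.measurable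
  have hWm : Measurable fun p : ℝ × ℝ => W p.1 p.2 := by
    simp only [hWdef]
    exact (hgm.comp (measurable_fst.mul measurable_snd)).mul (hqm.comp measurable_fst)
  have hJm : Measurable fun p : ℝ × ℝ => J p.1 p.2 := by
    simp only [hJdef]
    exact (measurable_const.indicator measurableSet_Icc).comp (measurable_fst.mul measurable_snd)
  have hqnn : Measurable fun t : ℝ => ((‖q t‖₊ : ℝ≥0∞)) := hqm.enorm
  -- bounds on integrals of J
  have hJ1 : ∀ c : ℝ, 0 < c → (∫⁻ t in Set.Ioi (0:ℝ), J t c) ≤ ENNReal.ofReal ((b - a)/c) := by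
    intro c hc
    have heq : ∀ t : ℝ, J t c = (Set.Icc (a/c) (b/c)).indicator (fun _ => (1:ℝ≥0∞)) t := by
      intro t
      simp only [hJdef]
      by_cases hmem : t * c ∈ Set.Icc a b
      · have hmem2 : t ∈ Set.Icc (a/c) (b/c) :=
          ⟨(div_le_iff₀ hc).mpr hmem.1, (le_div_iff₀ hc).mpr hmem.2⟩
        rw [Set.indicator_of_mem hmem, Set.indicator_of_mem hmem2]
      · have hmem2 : t ∉ Set.Icc (a/c) (b/c) := fun hcon =>
          hmem ⟨(div_le_iff₀ hc).mp hcon.1, (le_div_iff₀ hc).mp hcon.2⟩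
        rw [Set.indicator_of_notMem hmem, Set.indicator_of_notMem hmem2]
    calc (∫⁻ t in Set.Ioi (0:ℝ), J t c)
        = ∫⁻ t in Set.Ioi (0:ℝ), (Set.Icc (a/c) (b/c)).indicator (fun _ => (1:ℝ≥0∞)) t :=
          lintegral_congr heq
      _ ≤ ∫⁻ t, (Set.Icc (a/c) (b/c)).indicator (fun _ => (1:ℝ≥0∞)) t :=
          lintegral_mono' Measure.restrict_le_self le_rfl
      _ = volume (Set.Icc (a/c) (b/c)) := by
          rw [lintegral_indicator measurableSet_Icc, setLIntegral_one]
      _ = ENNReal.ofReal (b/c - a/c) := by rw [Real.volume_Icc]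
      _ = ENNReal.ofReal ((b - a)/c) := by rw [← sub_div]
  have hJ2 : ∀ x : ℝ, 0 < x →
      (∫⁻ y in Set.Ioi (0:ℝ), J x y * ENNReal.ofReal y⁻¹) ≤ ENNReal.ofReal ((b - a)/a) := by
    intro x hx
    have hbd : ∀ᵐ y ∂(volume.restrict (Set.Ioi (0:ℝ))),
        J x y * ENNReal.ofReal y⁻¹ ≤ ENNReal.ofReal (x/a) * J x y := by
      filter_upwards [ae_restrict_mem measurableSet_Ioi] with y hy
      simp only [hJdef]
      by_cases hmem : x * y ∈ Set.Icc a b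
      · simp only [Set.indicator_of_mem hmem, one_mul, mul_one]
        refine ENNReal.ofReal_le_ofReal ?_
        rw [inv_eq_one_div, div_le_div_iff₀ (Set.mem_Ioi.mp hy) ha]
        nlinarith [hmem.1, Set.mem_Ioi.mp hy]
      · simp [Set.indicator_of_notMem hmem]
    calc (∫⁻ y in Set.Ioi (0:ℝ), J x y * ENNReal.ofReal y⁻¹)
        ≤ ∫⁻ y in Set.Ioi (0:ℝ), ENNReal.ofReal (x/a) * J x y := lintegral_mono_ae hbd
      _ = ENNReal.ofReal (x/a) * ∫⁻ y in Set.Ioi (0:ℝ), J x y :=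
          lintegral_const_mul _ (hJm.comp (measurable_const.prodMk measurable_id))
      _ ≤ ENNReal.ofReal (x/a) * ENNReal.ofReal ((b - a)/x) := by
          refine mul_le_mul_right ?_ _
          calc (∫⁻ y in Set.Ioi (0:ℝ), J x y) = ∫⁻ y in Set.Ioi (0:ℝ), J y x := by
                refine lintegral_congr fun y => ?_
                simp only [hJdef, mul_comm]
            _ ≤ _ := hJ1 x hx
      _ = ENNReal.ofReal ((x/a) * ((b - a)/x)) := (ENNReal.ofReal_mul (by positivity)).symm
      _ = ENNReal.ofReal ((b - a)/a) := by
          congr 1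
          field_simp
  -- finiteness of ∫ ‖q‖² (the L² norm of F)
  have hS : (∫⁻ t in Set.Ioi (0:ℝ), ((‖q t‖₊ : ℝ≥0∞))^2) < ⊤ := by
    have h1 : ∀ t ∈ Set.Ioi (0:ℝ),
        ((‖q t‖₊ : ℝ≥0∞))^2 = ((‖F' t‖₊ : ℝ≥0∞))^2 * ENNReal.ofReal t⁻¹ := by
      intro t ht
      have ht0 : (0:ℝ) < t := ht
      have hnorm : ‖q t‖^2 = ‖F' t‖^2 * t⁻¹ := by
        simp only [hqdef, norm_div, Real.norm_eq_abs]
        rw [abs_of_nonneg (Real.sqrt_nonneg t), div_pow, Real.sq_sqrt ht0.le, div_eq_mul_inv]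
      calc ((‖q t‖₊ : ℝ≥0∞))^2
          = ENNReal.ofReal (‖q t‖^2) := by
            rw [← enorm_eq_nnnorm, ← ofReal_norm, ← ENNReal.ofReal_pow (norm_nonneg _)]
        _ = ENNReal.ofReal (‖F' t‖^2 * t⁻¹) := by rw [hnorm]
        _ = ENNReal.ofReal (‖F' t‖^2) * ENNReal.ofReal t⁻¹ := ENNReal.ofReal_mul (by positivity)
        _ = ((‖F' t‖₊ : ℝ≥0∞))^2 * ENNReal.ofReal t⁻¹ := by
            rw [ENNReal.ofReal_pow (norm_nonneg _), ofReal_norm, enorm_eq_nnnorm]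
    rw [setLIntegral_congr_fun measurableSet_Ioi h1]
    have h2 : (∫⁻ t in Set.Ioi (0:ℝ), ((‖F' t‖₊ : ℝ≥0∞))^2 * ENNReal.ofReal t⁻¹)
        = ∫⁻ t, ((‖F' t‖₊ : ℝ≥0∞))^2 ∂mulHaar := by
      rw [mulHaar, lintegral_withDensity_eq_lintegral_mul _ measurable_inv.ennreal_ofReal
        (show Measurable fun t => ((‖F' t‖₊ : ℝ≥0∞))^2 from hF'meas.enorm.pow_const 2)]
      exact lintegral_congr fun t => (mul_comm _ _)
    rw [h2]
    have h3 : (∫⁻ t, ((‖F' t‖₊ : ℝ≥0∞))^2 ∂mulHaar) = ∫⁻ t, ((‖F t‖₊ : ℝ≥0∞))^2 ∂mulHaar := by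
      refine lintegral_congr_ae ?_
      filter_upwards [hFF'haar] with t ht
      rw [ht]
    rw [h3]
    have h4 := lintegral_rpow_enorm_lt_top_of_eLpNorm_lt_top (p := 2) (f := F)
      (by norm_num) (by norm_num) hF.2
    have h5 : ∀ c : ℝ≥0∞, c ^ ((2:ℝ≥0∞).toReal) = c^2 := by
      intro c
      rw [ENNReal.toReal_ofNat, show (2:ℝ) = ((2:ℕ):ℝ) by norm_num, ENNReal.rpow_natCast]
    simp_rw [h5] at h4
    exact h4
  -- pointwise bounds
  have hwJ : ∀ t y : ℝ, ((‖W t y‖₊ : ℝ≥0∞)) ≤ ENNReal.ofReal M * J t y * ((‖q t‖₊ : ℝ≥0∞)) := by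
    intro t y
    by_cases hmem : t * y ∈ Set.Icc a b
    · have hJ1' : J t y = 1 := by simp only [hJdef]; exact Set.indicator_of_mem hmem _
      rw [hJ1', mul_one]
      have hW1 : ((‖W t y‖₊ : ℝ≥0∞)) = ((‖g (t*y)‖₊ : ℝ≥0∞)) * ((‖q t‖₊ : ℝ≥0∞)) := by
        simp only [hWdef]; rw [nnnorm_mul, ENNReal.coe_mul]
      rw [hW1]
      refine mul_le_mul_left ?_ _
      rw [← enorm_eq_nnnorm, ← ofReal_norm]
      exact ENNReal.ofReal_le_ofReal (hM _)
    · have hz : W t y = 0 := by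
        simp only [hWdef]
        rw [image_eq_zero_of_notMem_tsupport (fun hmm => hmem (hsub hmm)), zero_mul]
      simp [hz]
  have hwJ2 : ∀ t y : ℝ,
      ((‖W t y‖₊ : ℝ≥0∞))^2 ≤ (ENNReal.ofReal M)^2 * ((‖q t‖₊ : ℝ≥0∞))^2 * J t y := by
    intro t y
    have hJc : J t y * J t y = J t y := by
      simp only [hJdef]
      by_cases hmem : t*y ∈ Set.Icc a b
      · simp [Set.indicator_of_mem hmem]
      · simp [Set.indicator_of_notMem hmem]
    calc ((‖W t y‖₊ : ℝ≥0∞))^2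
        ≤ (ENNReal.ofReal M * J t y * ((‖q t‖₊ : ℝ≥0∞)))^2 := pow_le_pow_left' (hwJ t y) 2
      _ = (ENNReal.ofReal M)^2 * ((‖q t‖₊ : ℝ≥0∞))^2 * (J t y * J t y) := by ring
      _ = _ := by rw [hJc]
  have hmul_sq : ∀ A B : ℝ≥0∞, A * B ≤ A^2 + B^2 := by
    intro A B
    rcases le_total A B with hab' | hab'
    · calc A * B ≤ B * B := mul_le_mul_left hab' _
        _ = B^2 := (sq B).symm
        _ ≤ A^2 + B^2 := le_add_self
    · calc A * B ≤ A * A := mul_le_mul_right hab' _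
        _ = A^2 := (sq A).symm
        _ ≤ A^2 + B^2 := self_le_add_right _ _
  have hpt : ∀ x l y : ℝ, ((‖W x y * W l y‖₊ : ℝ≥0∞))
      ≤ ((‖W x y‖₊ : ℝ≥0∞))^2 * J l y + ((‖W l y‖₊ : ℝ≥0∞))^2 * J x y := by
    intro x l y
    rw [nnnorm_mul, ENNReal.coe_mul]
    by_cases hxy : x * y ∈ Set.Icc a b
    · by_cases hly : l * y ∈ Set.Icc a b
      · have e1 : J l y = 1 := by simp only [hJdef]; exact Set.indicator_of_mem hly _
        have e2 : J x y = 1 := by simp only [hJdef]; exact Set.indicator_of_mem hxy _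
        rw [e1, e2, mul_one, mul_one]
        exact hmul_sq _ _
      · have hz : W l y = 0 := by
          simp only [hWdef]
          rw [image_eq_zero_of_notMem_tsupport (fun hmm => hly (hsub hmm)), zero_mul]
        simp [hz]
    · have hz : W x y = 0 := by
        simp only [hWdef]
        rw [image_eq_zero_of_notMem_tsupport (fun hmm => hxy (hsub hmm)), zero_mul]
      simp [hz]
  -- the key inner estimate
  have hwmx : ∀ x : ℝ, Measurable fun p : ℝ × ℝ => ((‖W x p.2‖₊ : ℝ≥0∞))^2 * J p.1 p.2 := by
    intro x
    exact ((hWm.comp (measurable_const.prodMk measurable_snd)).enorm.pow_const 2).mul hJm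
  set C : ℝ≥0∞ := (ENNReal.ofReal M)^2 * ENNReal.ofReal (b - a) * ENNReal.ofReal ((b - a)/a)
    with hCdef
  have hInner : ∀ x : ℝ, 0 < x →
      (∫⁻ l in Set.Ioi (0:ℝ), ∫⁻ y in Set.Ioi (0:ℝ), ((‖W x y‖₊ : ℝ≥0∞))^2 * J l y)
        ≤ C * ((‖q x‖₊ : ℝ≥0∞))^2 := by
    intro x hx
    rw [lintegral_lintegral_swap (hwmx x).aemeasurable]
    have e : ∀ y : ℝ, (∫⁻ l in Set.Ioi (0:ℝ), ((‖W x y‖₊ : ℝ≥0∞))^2 * J l y)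
        = ((‖W x y‖₊ : ℝ≥0∞))^2 * ∫⁻ l in Set.Ioi (0:ℝ), J l y :=
      fun y => lintegral_const_mul _ (hJm.comp (measurable_id.prodMk measurable_const))
    rw [lintegral_congr e]
    calc (∫⁻ y in Set.Ioi (0:ℝ), ((‖W x y‖₊ : ℝ≥0∞))^2 * ∫⁻ l in Set.Ioi (0:ℝ), J l y)
        ≤ ∫⁻ y in Set.Ioi (0:ℝ),
            ((ENNReal.ofReal M)^2 * ((‖q x‖₊ : ℝ≥0∞))^2 * ENNReal.ofReal (b - a))
              * (J x y * ENNReal.ofReal y⁻¹) := by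
          refine lintegral_mono_ae ?_
          filter_upwards [ae_restrict_mem measurableSet_Ioi] with y hy
          have hy0 : (0:ℝ) < y := hy
          have h1 : (∫⁻ l in Set.Ioi (0:ℝ), J l y)
              ≤ ENNReal.ofReal (b - a) * ENNReal.ofReal y⁻¹ := by
            refine le_trans (hJ1 y hy0) ?_
            rw [div_eq_mul_inv, ENNReal.ofReal_mul (by linarith)]
          calc ((‖W x y‖₊ : ℝ≥0∞))^2 * (∫⁻ l in Set.Ioi (0:ℝ), J l y)
              ≤ ((ENNReal.ofReal M)^2 * ((‖q x‖₊ : ℝ≥0∞))^2 * J x y)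
                  * (ENNReal.ofReal (b - a) * ENNReal.ofReal y⁻¹) :=
                mul_le_mul' (hwJ2 x y) h1
            _ = ((ENNReal.ofReal M)^2 * ((‖q x‖₊ : ℝ≥0∞))^2 * ENNReal.ofReal (b - a))
                  * (J x y * ENNReal.ofReal y⁻¹) := by ring
      _ = ((ENNReal.ofReal M)^2 * ((‖q x‖₊ : ℝ≥0∞))^2 * ENNReal.ofReal (b - a))
            * ∫⁻ y in Set.Ioi (0:ℝ), J x y * ENNReal.ofReal y⁻¹ :=
          lintegral_const_mul _
            ((hJm.comp (measurable_const.prodMk measurable_id)).mul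
              measurable_inv.ennreal_ofReal)
      _ ≤ ((ENNReal.ofReal M)^2 * ((‖q x‖₊ : ℝ≥0∞))^2 * ENNReal.ofReal (b - a))
            * ENNReal.ofReal ((b - a)/a) := mul_le_mul_right (hJ2 x hx) _
      _ = C * ((‖q x‖₊ : ℝ≥0∞))^2 := by rw [hCdef]; ring
  -- integrability of the triple kernel
  have hΨm : Measurable fun p : (ℝ × ℝ) × ℝ => W p.1.1 p.2 * W p.1.2 p.2 :=
    (hWm.comp ((measurable_fst.comp measurable_fst).prodMk measurable_snd)).mul
      (hWm.comp ((measurable_snd.comp measurable_fst).prodMk measurable_snd))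
  have hA3 : Measurable fun p : (ℝ × ℝ) × ℝ => ((‖W p.1.1 p.2‖₊ : ℝ≥0∞))^2 * J p.1.2 p.2 :=
    ((hWm.comp ((measurable_fst.comp measurable_fst).prodMk measurable_snd)).enorm.pow_const
        2).mul
      (hJm.comp ((measurable_snd.comp measurable_fst).prodMk measurable_snd))
  have hB3 : Measurable fun p : (ℝ × ℝ) × ℝ => ((‖W p.1.2 p.2‖₊ : ℝ≥0∞))^2 * J p.1.1 p.2 :=
    ((hWm.comp ((measurable_snd.comp measurable_fst).prodMk measurable_snd)).enorm.pow_const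
        2).mul
      (hJm.comp ((measurable_fst.comp measurable_fst).prodMk measurable_snd))
  have hΨint : Integrable (fun p : (ℝ × ℝ) × ℝ => W p.1.1 p.2 * W p.1.2 p.2)
      (((volume.restrict (Set.Ioi (0:ℝ))).prod (volume.restrict (Set.Ioi (0:ℝ)))).prod
        (volume.restrict (Set.Ioi (0:ℝ)))) := by
    refine ⟨hΨm.aestronglyMeasurable, ?_⟩
    have hmm1 : Measurable fun p : (ℝ × ℝ) × ℝ =>
        ((‖W p.1.1 p.2 * W p.1.2 p.2‖₊ : ℝ≥0∞)) := hΨm.enorm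
    show (∫⁻ p, ((‖W p.1.1 p.2 * W p.1.2 p.2‖₊ : ℝ≥0∞))
        ∂(((volume.restrict (Set.Ioi (0:ℝ))).prod (volume.restrict (Set.Ioi (0:ℝ)))).prod
          (volume.restrict (Set.Ioi (0:ℝ))))) < ⊤
    rw [lintegral_prod _ hmm1.aemeasurable]
    rw [lintegral_prod _ (hmm1.lintegral_prod_right').aemeasurable]
    have hb1 : (∫⁻ x in Set.Ioi (0:ℝ), ∫⁻ l in Set.Ioi (0:ℝ), ∫⁻ y in Set.Ioi (0:ℝ),
        ((‖W x y * W l y‖₊ : ℝ≥0∞)))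
        ≤ ∫⁻ x in Set.Ioi (0:ℝ), ∫⁻ l in Set.Ioi (0:ℝ), ∫⁻ y in Set.Ioi (0:ℝ),
          (((‖W x y‖₊ : ℝ≥0∞))^2 * J l y + ((‖W l y‖₊ : ℝ≥0∞))^2 * J x y) :=
      lintegral_mono fun x => lintegral_mono fun l => lintegral_mono fun y => hpt x l y
    refine lt_of_le_of_lt hb1 ?_
    have hsplit : ∀ x l : ℝ, (∫⁻ y in Set.Ioi (0:ℝ),
          (((‖W x y‖₊ : ℝ≥0∞))^2 * J l y + ((‖W l y‖₊ : ℝ≥0∞))^2 * J x y))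
        = (∫⁻ y in Set.Ioi (0:ℝ), ((‖W x y‖₊ : ℝ≥0∞))^2 * J l y)
          + (∫⁻ y in Set.Ioi (0:ℝ), ((‖W l y‖₊ : ℝ≥0∞))^2 * J x y) := by
      intro x l
      exact lintegral_add_left
        (((hWm.comp (measurable_const.prodMk measurable_id)).enorm.pow_const 2).mul
          (hJm.comp (measurable_const.prodMk measurable_id))) _
    rw [lintegral_congr fun x => lintegral_congr fun l => hsplit x l]
    have hsplit2 : ∀ x : ℝ, (∫⁻ l in Set.Ioi (0:ℝ),
          ((∫⁻ y in Set.Ioi (0:ℝ), ((‖W x y‖₊ : ℝ≥0∞))^2 * J l y)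
          + (∫⁻ y in Set.Ioi (0:ℝ), ((‖W l y‖₊ : ℝ≥0∞))^2 * J x y)))
        = (∫⁻ l in Set.Ioi (0:ℝ), ∫⁻ y in Set.Ioi (0:ℝ), ((‖W x y‖₊ : ℝ≥0∞))^2 * J l y)
          + (∫⁻ l in Set.Ioi (0:ℝ), ∫⁻ y in Set.Ioi (0:ℝ), ((‖W l y‖₊ : ℝ≥0∞))^2 * J x y) := by
      intro x
      exact lintegral_add_left ((hwmx x).lintegral_prod_right') _
    rw [lintegral_congr fun x => hsplit2 x]
    have hAm : Measurable fun x : ℝ =>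
        ∫⁻ l in Set.Ioi (0:ℝ), ∫⁻ y in Set.Ioi (0:ℝ), ((‖W x y‖₊ : ℝ≥0∞))^2 * J l y :=
      (hA3.lintegral_prod_right').lintegral_prod_right'
    rw [lintegral_add_left hAm]
    have hT2eq : (∫⁻ x in Set.Ioi (0:ℝ), ∫⁻ l in Set.Ioi (0:ℝ), ∫⁻ y in Set.Ioi (0:ℝ),
          ((‖W l y‖₊ : ℝ≥0∞))^2 * J x y)
        = ∫⁻ x in Set.Ioi (0:ℝ), ∫⁻ l in Set.Ioi (0:ℝ), ∫⁻ y in Set.Ioi (0:ℝ),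
          ((‖W x y‖₊ : ℝ≥0∞))^2 * J l y :=
      lintegral_lintegral_swap (hB3.lintegral_prod_right').aemeasurable
    rw [hT2eq]
    have hTbound : (∫⁻ x in Set.Ioi (0:ℝ), ∫⁻ l in Set.Ioi (0:ℝ), ∫⁻ y in Set.Ioi (0:ℝ),
          ((‖W x y‖₊ : ℝ≥0∞))^2 * J l y)
        ≤ C * ∫⁻ t in Set.Ioi (0:ℝ), ((‖q t‖₊ : ℝ≥0∞))^2 := by
      calc _ ≤ ∫⁻ x in Set.Ioi (0:ℝ), C * ((‖q x‖₊ : ℝ≥0∞))^2 := by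
            refine lintegral_mono_ae ?_
            filter_upwards [ae_restrict_mem measurableSet_Ioi] with x hx
            exact hInner x hx
        _ = C * ∫⁻ t in Set.Ioi (0:ℝ), ((‖q t‖₊ : ℝ≥0∞))^2 :=
            lintegral_const_mul _ (hqnn.pow_const 2)
    have hCfin : C < ⊤ := by
      rw [hCdef]
      exact ENNReal.mul_lt_top
        (ENNReal.mul_lt_top (ENNReal.pow_lt_top ENNReal.ofReal_lt_top) ENNReal.ofReal_lt_top)
        ENNReal.ofReal_lt_top
    have hfin : C * (∫⁻ t in Set.Ioi (0:ℝ), ((‖q t‖₊ : ℝ≥0∞))^2) < ⊤ :=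
      ENNReal.mul_lt_top hCfin hS
    exact lt_of_le_of_lt (add_le_add hTbound hTbound) (ENNReal.add_lt_top.mpr ⟨hfin, hfin⟩)
  -- replace F by F' in the goal
  have step1 : (∫ x in Set.Ioi (0:ℝ),
        (∫ l in Set.Ioi (0:ℝ), h (x / l) * Real.sqrt (x / l) * F l / l) * F x / x)
      = ∫ x in Set.Ioi (0:ℝ),
        (∫ l in Set.Ioi (0:ℝ), h (x / l) * Real.sqrt (x / l) * F' l / l) * F' x / x := by
    have hinner : ∀ x : ℝ, (∫ l in Set.Ioi (0:ℝ), h (x / l) * Real.sqrt (x / l) * F l / l)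
        = ∫ l in Set.Ioi (0:ℝ), h (x / l) * Real.sqrt (x / l) * F' l / l := by
      intro x
      refine integral_congr_ae ?_
      filter_upwards [hFF'] with l hl
      rw [hl]
    refine integral_congr_ae ?_
    filter_upwards [hFF'] with x hx
    rw [hinner x, hx]
  rw [step1]
  -- pointwise identification of the quadratic form
  have key : ∀ (I u v sx sl X L : ℝ), sx ≠ 0 → sl ≠ 0 → sx * sx = X → sl * sl = L →
      L * I * (sx / sl) * v / L * u / X = I * (u / sx * (v / sl)) := by
    intro I u v sx sl X L hsx hsl hX hL
    subst hX hL
    field_simp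
  have step2 : ∀ x ∈ Set.Ioi (0:ℝ),
      (∫ l in Set.Ioi (0:ℝ), h (x / l) * Real.sqrt (x / l) * F' l / l) * F' x / x
        = ∫ l in Set.Ioi (0:ℝ), ∫ y in Set.Ioi (0:ℝ), W x y * W l y := by
    intro x hx
    have hx0 : (0:ℝ) < x := hx
    rw [← integral_mul_const, ← integral_div]
    refine setIntegral_congr_fun measurableSet_Ioi fun l hl => ?_
    have hl0 : (0:ℝ) < l := hl
    have hI : h (x / l) = l * ∫ y in Set.Ioi (0:ℝ), g (x * y) * g (l * y) := by
      have hcv := integral_comp_mul_left_Ioi (fun y => g (x / l * y) * g y) 0 hl0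
      simp only [mul_zero, smul_eq_mul] at hcv
      have harg : ∀ y : ℝ, x / l * (l * y) = x * y := by
        intro y; field_simp
      simp only [harg] at hcv
      rw [hh, hcv, ← mul_assoc, mul_inv_cancel₀ hl0.ne', one_mul]
    have hRHS : (∫ y in Set.Ioi (0:ℝ), W x y * W l y)
        = (∫ y in Set.Ioi (0:ℝ), g (x * y) * g (l * y)) * (q x * q l) := by
      rw [← integral_mul_const]
      refine integral_congr_ae (Filter.Eventually.of_forall fun y => ?_)
      simp only [hWdef]
      ring
    rw [hI, hRHS, Real.sqrt_div hx0.le]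
    have hqx : q x = F' x / Real.sqrt x := by simp only [hqdef]
    have hql : q l = F' l / Real.sqrt l := by simp only [hqdef]
    rw [hqx, hql]
    exact key _ (F' x) (F' l) (Real.sqrt x) (Real.sqrt l) x l
      (Real.sqrt_pos.mpr hx0).ne' (Real.sqrt_pos.mpr hl0).ne'
      (Real.mul_self_sqrt hx0.le) (Real.mul_self_sqrt hl0.le)
  rw [setIntegral_congr_fun measurableSet_Ioi (fun x hx => step2 x hx)]
  -- Fubini and conclusion
  have hDint : Integrable (fun z : ℝ × ℝ => ∫ y in Set.Ioi (0:ℝ), W z.1 y * W z.2 y)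
      ((volume.restrict (Set.Ioi (0:ℝ))).prod (volume.restrict (Set.Ioi (0:ℝ)))) :=
    hΨint.integral_prod_left
  have e1 : (∫ x in Set.Ioi (0:ℝ), ∫ l in Set.Ioi (0:ℝ), ∫ y in Set.Ioi (0:ℝ), W x y * W l y)
      = ∫ z, (∫ y in Set.Ioi (0:ℝ), W z.1 y * W z.2 y)
          ∂((volume.restrict (Set.Ioi (0:ℝ))).prod (volume.restrict (Set.Ioi (0:ℝ)))) :=
    integral_integral hDint
  have e2 : (∫ z, (∫ y in Set.Ioi (0:ℝ), W z.1 y * W z.2 y)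
        ∂((volume.restrict (Set.Ioi (0:ℝ))).prod (volume.restrict (Set.Ioi (0:ℝ)))))
      = ∫ y in Set.Ioi (0:ℝ), ∫ z, W z.1 y * W z.2 y
          ∂((volume.restrict (Set.Ioi (0:ℝ))).prod (volume.restrict (Set.Ioi (0:ℝ)))) :=
    integral_integral_swap hΨint
  rw [e1, e2]
  refine integral_nonneg fun y => ?_
  have e3 : (∫ z, W z.1 y * W z.2 y
        ∂((volume.restrict (Set.Ioi (0:ℝ))).prod (volume.restrict (Set.Ioi (0:ℝ)))))
      = (∫ t in Set.Ioi (0:ℝ), W t y) * (∫ t in Set.Ioi (0:ℝ), W t y) :=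
    integral_prod_mul (fun t => W t y) (fun t => W t y)
  rw [e3]
  exact mul_self_nonneg _
end

section
/- Let s be complex with 0 < Re(s) < 1. For every real a > 0, the tail integral ∫_a^∞ t^{s-1} cos t dt satisfies the bound |∫_a^∞ t^{s-1} cos t dt| ≤ a^{Re(s)-1}(1 + |s-1|/(1 - Re(s))). -/
open Filter MeasureTheory intervalIntegral Set

/-- For `0 < Re s < 1` and `a > 0`, the tail integral `∫_a^∞ t^{s-1} cos t dt` converges and
satisfies `|∫_a^∞ t^{s-1} cos t dt| ≤ a^{Re s - 1} (1 + |s-1|/(1 - Re s))`. -/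
theorem stmt8 (s : ℂ) (h0 : 0 < s.re) (h1 : s.re < 1) (a : ℝ) (ha : 0 < a) :
    ∃ L : ℂ, Tendsto (fun N : ℝ => ∫ t in a..N, (t : ℂ) ^ (s - 1) * Real.cos t)
        atTop (nhds L) ∧
      ‖L‖ ≤ a ^ (s.re - 1) * (1 + ‖s - 1‖ / (1 - s.re)) := by
  have h1s : (0:ℝ) < 1 - s.re := by linarith
  -- derivative of u t = t ^ (s-1)
  have hderiv : ∀ t : ℝ, 0 < t →
      HasDerivAt (fun y : ℝ => (y : ℂ) ^ (s - 1)) ((s - 1) * (t : ℂ) ^ (s - 2)) t := by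
    intro t ht
    have h1 : HasDerivAt (fun z : ℂ => z ^ (s - 1)) ((s - 1) * (t : ℂ) ^ (s - 1 - 1) * 1) t := by
      exact (hasDerivAt_id (t : ℂ)).cpow_const (by exact Or.inl (by simpa using ht))
    have := h1.comp_ofReal
    simpa [mul_one, sub_sub, one_add_one_eq_two] using this
  -- norm of t ^ c
  have hnorm : ∀ (t : ℝ), 0 < t → ∀ c : ℂ, ‖(t : ℂ) ^ c‖ = t ^ c.re := fun t ht c =>
    Complex.norm_cpow_eq_rpow_re_of_pos ht c
  -- integrability of majorant
  have hmaj : IntegrableOn (fun t : ℝ => ‖s - 1‖ * t ^ (s.re - 2)) (Ioi a) := by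
    exact (integrableOn_Ioi_rpow_of_lt (by linarith) ha).const_mul _
  -- a.e. measurability / continuity of the inner integrand
  have hcont : ContinuousOn (fun t : ℝ => (s - 1) * (t : ℂ) ^ (s - 2) * Real.sin t) (Ioi a) := by
    apply ContinuousOn.mul
    · apply ContinuousOn.mul continuousOn_const
      apply Complex.continuous_ofReal.continuousOn.cpow_const
      intro t ht
      exact Or.inl (by simpa using lt_trans ha ht)
    · exact (Complex.continuous_ofReal.comp Real.continuous_sin).continuousOn
  have hbound : ∀ t ∈ Ioi a, ‖(s - 1) * (t : ℂ) ^ (s - 2) * Real.sin t‖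
      ≤ ‖s - 1‖ * t ^ (s.re - 2) := by
    intro t ht
    have ht0 : 0 < t := lt_trans ha ht
    rw [norm_mul, norm_mul, hnorm t ht0]
    have : ‖(Real.sin t : ℂ)‖ ≤ 1 := by
      rw [Complex.norm_real]; exact abs_le.2 ⟨Real.neg_one_le_sin t, Real.sin_le_one t⟩
    calc ‖s - 1‖ * t ^ ((s:ℂ) - 2).re * ‖(Real.sin t : ℂ)‖
        ≤ ‖s - 1‖ * t ^ ((s:ℂ) - 2).re * 1 := by
          apply mul_le_mul_of_nonneg_left this
          positivity
      _ = ‖s - 1‖ * t ^ (s.re - 2) := by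
          norm_num [Complex.sub_re]
  have hint : IntegrableOn (fun t : ℝ => (s - 1) * (t : ℂ) ^ (s - 2) * Real.sin t) (Ioi a) := by
    apply Integrable.mono' hmaj (hcont.aestronglyMeasurable measurableSet_Ioi)
    exact (ae_restrict_iff' measurableSet_Ioi).2 (Filter.Eventually.of_forall hbound)
  set I : ℂ := ∫ t in Ioi a, (s - 1) * (t : ℂ) ^ (s - 2) * Real.sin t with hI
  refine ⟨-((a : ℂ) ^ (s - 1) * Real.sin a) - I, ?_, ?_⟩
  · -- convergence
    have hG : Tendsto (fun N : ℝ => ∫ t in a..N, (s - 1) * (t : ℂ) ^ (s - 2) * Real.sin t)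
        atTop (nhds I) :=
      intervalIntegral_tendsto_integral_Ioi a hint tendsto_id
    have hB : Tendsto (fun N : ℝ => (N : ℂ) ^ (s - 1) * Real.sin N) atTop (nhds 0) := by
      refine squeeze_zero_norm' (a := fun N : ℝ => N ^ (s.re - 1)) ?_ ?_
      · filter_upwards [eventually_gt_atTop 0] with N hN
        rw [norm_mul, hnorm N hN]
        calc N ^ ((s:ℂ)-1).re * ‖(Real.sin N : ℂ)‖ ≤ N ^ ((s:ℂ)-1).re * 1 := by
              apply mul_le_mul_of_nonneg_left _ (by positivity)
              rw [Complex.norm_real]; exact abs_le.2 ⟨Real.neg_one_le_sin N, Real.sin_le_one N⟩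
          _ = N ^ (s.re - 1) := by norm_num [Complex.sub_re]
      · simpa using tendsto_rpow_neg_atTop (by linarith : (0:ℝ) < 1 - s.re)
    have key : ∀ᶠ N : ℝ in atTop, (N : ℂ) ^ (s - 1) * Real.sin N
          - (a : ℂ) ^ (s - 1) * Real.sin a
          - (∫ t in a..N, (s - 1) * (t : ℂ) ^ (s - 2) * Real.sin t)
        = ∫ t in a..N, (t : ℂ) ^ (s - 1) * Real.cos t := by
      filter_upwards [eventually_ge_atTop a] with N hN
      have huIcc : ∀ t ∈ uIcc a N, 0 < t := by
        intro t ht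
        rw [uIcc_of_le hN] at ht
        exact lt_of_lt_of_le ha ht.1
      rw [intervalIntegral.integral_mul_deriv_eq_deriv_mul
        (u := fun t : ℝ => (t : ℂ) ^ (s - 1)) (u' := fun t : ℝ => (s - 1) * (t : ℂ) ^ (s - 2))
        (v := fun t : ℝ => (Real.sin t : ℂ)) (v' := fun t : ℝ => (Real.cos t : ℂ))
        (fun t ht => hderiv t (huIcc t ht))
        (fun t _ => (Real.hasDerivAt_sin t).ofReal_comp)
        ?_ ?_]
      · apply ContinuousOn.intervalIntegrable
        apply ContinuousOn.mul continuousOn_const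
        apply Complex.continuous_ofReal.continuousOn.cpow_const
        intro t ht
        exact Or.inl (by simpa using huIcc t ht)
      · exact (Complex.continuous_ofReal.comp Real.continuous_cos).continuousOn.intervalIntegrable
    have := ((hB.sub tendsto_const_nhds).sub hG).congr' key
    simpa using this
  · -- the bound
    have hIbound : ‖I‖ ≤ ‖s - 1‖ * (a ^ (s.re - 1) / (1 - s.re)) := by
      have := norm_integral_le_of_norm_le hmaj
        ((ae_restrict_iff' measurableSet_Ioi).2 (Filter.Eventually.of_forall hbound))
      refine this.trans ?_
      rw [MeasureTheory.integral_const_mul, integral_Ioi_rpow_of_lt (by linarith) ha,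
        show s.re - 2 + 1 = s.re - 1 from by ring]
      apply mul_le_mul_of_nonneg_left (le_of_eq ?_) (norm_nonneg _)
      rw [neg_div, ← div_neg, neg_sub]
    have hA : ‖(a : ℂ) ^ (s - 1) * (Real.sin a : ℂ)‖ ≤ a ^ (s.re - 1) := by
      rw [norm_mul, hnorm a ha]
      calc a ^ ((s:ℂ)-1).re * ‖(Real.sin a : ℂ)‖ ≤ a ^ ((s:ℂ)-1).re * 1 := by
            apply mul_le_mul_of_nonneg_left _ (by positivity)
            rw [Complex.norm_real]; exact abs_le.2 ⟨Real.neg_one_le_sin a, Real.sin_le_one a⟩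
        _ = a ^ (s.re - 1) := by norm_num [Complex.sub_re]
    calc ‖-((a : ℂ) ^ (s - 1) * Real.sin a) - I‖
        ≤ ‖(a : ℂ) ^ (s - 1) * (Real.sin a : ℂ)‖ + ‖I‖ := by
          simpa using norm_sub_le (-((a : ℂ) ^ (s - 1) * Real.sin a)) I
      _ ≤ a ^ (s.re - 1) + ‖s - 1‖ * (a ^ (s.re - 1) / (1 - s.re)) := add_le_add hA hIbound
      _ = a ^ (s.re - 1) * (1 + ‖s - 1‖ / (1 - s.re)) := by ring
end

section
/- Fix Λ > 1 and 0 < μ < 1. Let g : (0,∞) → ℝ be supported in (√μ, 1/√μ), let S_Λ(t) = 1 if t > 1/Λ and 0 otherwise, and let g*(x) = x⁻¹ g(x⁻¹). Define B on L²((0,∞), dz/z) by (BF)(z) = (1 + |log z|) ∫_0^∞ [S_Λ(z) - S_Λ(y)] g*(z/y) √(z/y) F(y) dy/y. Then B is a Hilbert–Schmidt operator, i.e. its kernel (1+|log z|)[S_Λ(z)-S_Λ(y)] g*(z/y)√(z/y) is square-integrable on (0,∞)² with respect to (dz/z)(dy/y). -/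
open MeasureTheory

lemma mulHaar_Ioo_lt_top {a b : ℝ} (ha : 0 < a) : mulHaar (Set.Ioo a b) < ⊤ := by
  rw [mulHaar, withDensity_apply _ measurableSet_Ioo]
  calc ∫⁻ x in Set.Ioo a b, ENNReal.ofReal x⁻¹ ∂(volume.restrict (Set.Ioi 0))
      ≤ ∫⁻ _ in Set.Ioo a b, ENNReal.ofReal a⁻¹ ∂(volume.restrict (Set.Ioi 0)) := by
        refine setLIntegral_mono measurable_const fun x hx => ?_
        exact ENNReal.ofReal_le_ofReal
          (inv_anti₀ ha hx.1.le)
    _ = ENNReal.ofReal a⁻¹ * (volume.restrict (Set.Ioi 0)) (Set.Ioo a b) := by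
        rw [setLIntegral_const]
    _ ≤ ENNReal.ofReal a⁻¹ * volume (Set.Ioo a b) := by
        gcongr
        exact Measure.restrict_le_self
    _ < ⊤ := ENNReal.mul_lt_top ENNReal.ofReal_lt_top (by simp [Real.volume_Ioo])

lemma mulHaar_compl_Ioi : mulHaar ((Set.Ioi (0:ℝ))ᶜ) = 0 := by
  rw [mulHaar, withDensity_apply _ measurableSet_Ioi.compl]
  have h : (volume.restrict (Set.Ioi (0:ℝ))) ((Set.Ioi (0:ℝ))ᶜ) = 0 := by
    rw [Measure.restrict_apply measurableSet_Ioi.compl, Set.compl_Ioi]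
    have he : Set.Iic (0:ℝ) ∩ Set.Ioi 0 = ∅ := by
      ext x
      simp only [Set.mem_inter_iff, Set.mem_Iic, Set.mem_Ioi, Set.mem_empty_iff_false,
        iff_false, not_and, not_lt]
      intro h; exact h
    rw [he, measure_empty]
  rw [Measure.restrict_restrict measurableSet_Ioi.compl] at *
  exact setLIntegral_measure_zero _ _ (by simpa using h)

instance : SFinite mulHaar := by
  unfold mulHaar; infer_instance

/-- The operator `B` with kernel `(1+|log z|)[S_Λ(z)-S_Λ(y)] g*(z/y) √(z/y)` is
Hilbert–Schmidt: its kernel is square-integrable on `(0,∞)²` for `(dz/z)(dy/y)`. -/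
theorem stmt12 (Λ μ : ℝ) (hΛ : 1 < Λ) (hμ0 : 0 < μ) (hμ1 : μ < 1)
    (g : ℝ → ℝ) (hmeas : Measurable g) (hbd : ∃ M, ∀ x, |g x| ≤ M)
    (hsupp : ∀ x, x ∉ Set.Ioo (Real.sqrt μ) (Real.sqrt μ)⁻¹ → g x = 0)
    (gs : ℝ → ℝ) (hgs : ∀ x, gs x = g x⁻¹ / x) :
    MemLp (fun p : ℝ × ℝ =>
        (1 + |Real.log p.1|) *
          ((if Λ⁻¹ < p.1 then (1:ℝ) else 0) - (if Λ⁻¹ < p.2 then (1:ℝ) else 0)) *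
            gs (p.1 / p.2) * Real.sqrt (p.1 / p.2))
      2 (mulHaar.prod mulHaar) := by
  obtain ⟨M, hM⟩ := hbd
  have hM0 : 0 ≤ M := le_trans (abs_nonneg _) (hM 0)
  set s := Real.sqrt μ with hs_def
  have hs0 : 0 < s := Real.sqrt_pos.mpr hμ0
  have hs1 : s < 1 := by
    rw [hs_def]
    have := Real.sqrt_lt_sqrt hμ0.le hμ1
    simpa using this
  have hΛ0 : 0 < Λ := lt_trans one_pos hΛ
  set ε : ℝ := s / (2*Λ) with hε_def
  set R : ℝ := 2 / (s*Λ) with hR_def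
  have hε0 : 0 < ε := by positivity
  have hR0 : 0 < R := by positivity
  -- key interval facts
  have hεΛ : ε < Λ⁻¹ := by
    rw [hε_def, inv_eq_one_div, div_lt_div_iff₀ (by positivity) hΛ0]
    nlinarith
  have hΛR : Λ⁻¹ < R := by
    rw [hR_def, inv_eq_one_div, div_lt_div_iff₀ hΛ0 (by positivity)]
    nlinarith
  have hsΛR : Λ⁻¹ / s < R := by
    rw [hR_def, div_lt_div_iff₀ hs0 (by positivity)]
    have he : Λ⁻¹ * (s * Λ) = s := by field_simp
    rw [he]; nlinarith
  have hεsΛ : ε < s * Λ⁻¹ := by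
    rw [hε_def, div_lt_iff₀ (by positivity)]
    have he : s * Λ⁻¹ * (2 * Λ) = 2 * s := by field_simp
    rw [he]; nlinarith
  -- measurability of gs and of the kernel
  have hgs_eq : gs = fun x => g x⁻¹ / x := funext hgs
  have hgs_meas : Measurable gs := by
    rw [hgs_eq]; exact (hmeas.comp measurable_inv).div measurable_id
  set K : ℝ × ℝ → ℝ := fun p : ℝ × ℝ =>
      (1 + |Real.log p.1|) *
        ((if Λ⁻¹ < p.1 then (1:ℝ) else 0) - (if Λ⁻¹ < p.2 then (1:ℝ) else 0)) *
          gs (p.1 / p.2) * Real.sqrt (p.1 / p.2) with hK_def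
  have hK_meas : Measurable K := by
    apply Measurable.mul
    apply Measurable.mul
    apply Measurable.mul
    · exact (measurable_const.add ((Real.measurable_log.comp measurable_fst).abs))
    · exact Measurable.sub
        (Measurable.ite (measurableSet_lt measurable_const measurable_fst)
          measurable_const measurable_const)
        (Measurable.ite (measurableSet_lt measurable_const measurable_snd)
          measurable_const measurable_const)
    · exact hgs_meas.comp (measurable_fst.div measurable_snd)
    · exact Real.continuous_sqrt.measurable.comp (measurable_fst.div measurable_snd)
  -- the bounding constant
  set C₁ : ℝ := 1 + |Real.log ε| + |Real.log R| with hC₁_def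
  set C₂ : ℝ := (M / s) * s⁻¹ with hC₂_def
  have hC₁0 : 0 ≤ C₁ := by positivity
  have hC₂0 : 0 ≤ C₂ := by positivity
  set C : ℝ := C₁ * C₂ with hC_def
  have hC0 : 0 ≤ C := mul_nonneg hC₁0 hC₂0
  -- bound on gs x * sqrt x for x > 0
  have hgs_bd : ∀ x : ℝ, 0 < x → |gs x * Real.sqrt x| ≤ C₂ := by
    intro x hx
    by_cases hmem : x⁻¹ ∈ Set.Ioo s s⁻¹
    · have hxs : s < x := (inv_lt_inv₀ hx hs0).mp hmem.2
      have hxub : x < s⁻¹ := (lt_inv_comm₀ hx hs0).mpr hmem.1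
      rw [abs_mul]
      have h1 : |gs x| ≤ M / s := by
        rw [hgs x, abs_div, abs_of_pos hx]
        exact div_le_div₀ hM0 (hM _) hs0 hxs.le
      have h2 : |Real.sqrt x| ≤ s⁻¹ := by
        rw [abs_of_nonneg (Real.sqrt_nonneg x)]
        have hinv1 : 1 ≤ s⁻¹ := by rw [le_inv_comm₀ one_pos hs0]; simpa using hs1.le
        rw [show s⁻¹ = Real.sqrt ((s⁻¹)^2) from (Real.sqrt_sq (by positivity)).symm]
        apply Real.sqrt_le_sqrt
        nlinarith [hxub, hinv1, sq_nonneg (s⁻¹ - 1)]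
      calc |gs x| * |Real.sqrt x| ≤ (M / s) * s⁻¹ :=
            mul_le_mul h1 h2 (abs_nonneg _) (by positivity)
        _ = C₂ := rfl
    · have : gs x = 0 := by rw [hgs x, hsupp _ hmem, zero_div]
      rw [this, zero_mul, abs_zero]; exact hC₂0
  -- the indicator domination set
  set A : Set (ℝ × ℝ) := Set.Ioo ε R ×ˢ Set.Ioo ε R with hA_def
  have hA_meas : MeasurableSet A := (measurableSet_Ioo).prod measurableSet_Ioo
  have hA_fin : (mulHaar.prod mulHaar) A < ⊤ := by
    rw [hA_def, Measure.prod_prod]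
    exact ENNReal.mul_lt_top (mulHaar_Ioo_lt_top hε0) (mulHaar_Ioo_lt_top hε0)
  -- the dominating function
  have hind : MemLp (A.indicator fun _ => C) 2 (mulHaar.prod mulHaar) :=
    memLp_indicator_const 2 hA_meas C (Or.inr hA_fin.ne)
  refine hind.mono hK_meas.aestronglyMeasurable ?_
  -- a.e. the positive quadrant
  have hquad : (mulHaar.prod mulHaar) ((Set.Ioi (0:ℝ) ×ˢ Set.Ioi (0:ℝ))ᶜ) = 0 := by
    have hsub : (Set.Ioi (0:ℝ) ×ˢ Set.Ioi (0:ℝ))ᶜ ⊆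
        ((Set.Ioi (0:ℝ))ᶜ ×ˢ (Set.univ : Set ℝ)) ∪ ((Set.univ : Set ℝ) ×ˢ (Set.Ioi (0:ℝ))ᶜ) := by
      intro p hp
      rw [Set.mem_compl_iff, Set.mem_prod] at hp
      push_neg at hp
      by_cases h1 : p.1 ∈ Set.Ioi (0:ℝ)
      · exact Or.inr ⟨Set.mem_univ _, hp h1⟩
      · exact Or.inl ⟨h1, Set.mem_univ _⟩
    refine measure_mono_null hsub (measure_union_null ?_ ?_)
    · rw [Measure.prod_prod, mulHaar_compl_Ioi, zero_mul]
    · rw [Measure.prod_prod, mulHaar_compl_Ioi, mul_zero]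
  refine Filter.eventually_of_mem (MeasureTheory.mem_ae_iff.mpr hquad) ?_
  rintro ⟨z, y⟩ ⟨hz, hy⟩
  simp only [Set.mem_Ioi] at hz hy
  by_cases hpA : (z, y) ∈ A
  · -- bounded on A
    have hindC : (A.indicator fun _ => C) (z, y) = C := Set.indicator_of_mem hpA _
    rw [hindC]
    have hzR : z ∈ Set.Ioo ε R := hpA.1
    have hlog : 1 + |Real.log z| ≤ C₁ := by
      have h1 : Real.log ε ≤ Real.log z := Real.log_le_log hε0 hzR.1.le
      have h2 : Real.log z ≤ Real.log R := Real.log_le_log (lt_trans hε0 hzR.1) hzR.2.le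
      rw [hC₁_def]
      have : |Real.log z| ≤ |Real.log ε| + |Real.log R| := by
        rw [abs_le]
        constructor
        · calc -(|Real.log ε| + |Real.log R|) ≤ -|Real.log ε| := by
                simp [abs_nonneg]
            _ ≤ Real.log ε := neg_abs_le _
            _ ≤ Real.log z := h1
        · calc Real.log z ≤ Real.log R := h2
            _ ≤ |Real.log R| := le_abs_self _
            _ ≤ |Real.log ε| + |Real.log R| := by simp [abs_nonneg]
      linarith
    have hdiff : |((if Λ⁻¹ < z then (1:ℝ) else 0) - (if Λ⁻¹ < y then (1:ℝ) else 0))| ≤ 1 := by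
      split_ifs <;> norm_num
    have hgsb : |gs (z / y) * Real.sqrt (z / y)| ≤ C₂ := hgs_bd _ (div_pos hz hy)
    have hre : K (z, y) =
        ((1 + |Real.log z|) *
          ((if Λ⁻¹ < z then (1:ℝ) else 0) - (if Λ⁻¹ < y then (1:ℝ) else 0))) *
        (gs (z / y) * Real.sqrt (z / y)) := by
      rw [hK_def]; ring
    rw [Real.norm_eq_abs, Real.norm_eq_abs, hre, abs_mul, abs_mul, abs_of_nonneg hC0]
    have hstep1 : abs (1 + |Real.log z|) ≤ C₁ := by
      rw [abs_of_nonneg (by positivity)]; exact hlog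
    have hstep : abs (1 + |Real.log z|) *
        |((if Λ⁻¹ < z then (1:ℝ) else 0) - (if Λ⁻¹ < y then (1:ℝ) else 0))| ≤ C₁ * 1 :=
      mul_le_mul hstep1 hdiff (abs_nonneg _) hC₁0
    have hfin := mul_le_mul hstep hgsb (abs_nonneg _) (by positivity : (0:ℝ) ≤ C₁ * 1)
    rw [mul_one] at hfin
    exact hfin
  · -- outside A the kernel vanishes
    have hK0 : K (z, y) = 0 := by
      by_cases hgs0 : gs (z / y) = 0
      · rw [hK_def]; simp [hgs0]
      by_cases hd0 : ((if Λ⁻¹ < z then (1:ℝ) else 0) - (if Λ⁻¹ < y then (1:ℝ) else 0)) = 0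
      · rw [hK_def]; simp only; rw [hd0]; ring
      exfalso
      -- gs (z/y) ≠ 0 forces (z/y)⁻¹ ∈ Ioo s s⁻¹
      have hmem : (z / y)⁻¹ ∈ Set.Ioo s s⁻¹ := by
        by_contra hc
        exact hgs0 (by rw [hgs _, hsupp _ hc, zero_div])
      have hyz1 : s < y / z := by
        have := hmem.1
        rwa [inv_div] at this
      have hyz2 : y / z < s⁻¹ := by
        have := hmem.2
        rwa [inv_div] at this
      have hszy : s * z < y := (lt_div_iff₀ hz).mp hyz1
      have hsyz : s * y < z := by
        have h1 : y < s⁻¹ * z := by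
          rw [div_lt_iff₀ hz] at hyz2
          linarith [hyz2]
        calc s * y < s * (s⁻¹ * z) := by
              exact (mul_lt_mul_iff_right₀ hs0).mpr h1
          _ = z := by field_simp
      apply hpA
      rw [hA_def]
      by_cases hzΛ : Λ⁻¹ < z
      · have hyΛ : ¬ (Λ⁻¹ < y) := by
          intro h; apply hd0; rw [if_pos hzΛ, if_pos h]; ring
        push_neg at hyΛ
        constructor
        · constructor
          · exact lt_trans hεΛ hzΛ
          · calc z < y / s := (lt_div_iff₀ hs0).mpr (by linarith [hszy])
              _ ≤ Λ⁻¹ / s := by gcongr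
              _ < R := hsΛR
        · constructor
          · calc ε < s * Λ⁻¹ := hεsΛ
              _ < s * z := (mul_lt_mul_iff_right₀ hs0).mpr hzΛ
              _ < y := hszy
          · exact lt_of_le_of_lt hyΛ hΛR
      · have hyΛ : Λ⁻¹ < y := by
          rcases lt_or_ge Λ⁻¹ y with h | h
          · exact h
          · exfalso; apply hd0; rw [if_neg hzΛ, if_neg (not_lt.mpr h)]; ring
        push_neg at hzΛ
        constructor
        · constructor
          · calc ε < s * Λ⁻¹ := hεsΛ
              _ < s * y := (mul_lt_mul_iff_right₀ hs0).mpr hyΛ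
              _ < z := hsyz
          · exact lt_of_le_of_lt hzΛ hΛR
        · constructor
          · exact lt_trans hεΛ hyΛ
          · calc y < z / s := (lt_div_iff₀ hs0).mpr (by linarith [hsyz])
              _ ≤ Λ⁻¹ / s := by gcongr
              _ < R := hsΛR
    rw [hK0, norm_zero]
    exact norm_nonneg _
end

section
/- Let g : (0,∞) → ℝ be bounded measurable with compact support in (0,∞). Then the kernel k(x,z) = g(x/z)√(x/z)/(1 + |log z|) is square-integrable on (0,∞)×(0,∞) with respect to the product measure (dx/x)(dz/z); consequently the operator A F(x) = ∫_0^∞ k(x,z) F(z) dz/z is Hilbert–Schmidt on L²((0,∞), dx/x). -/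
open MeasureTheory
open scoped ENNReal

lemma mulHaar_ae_Ioi : ∀ᵐ z ∂mulHaar, z ∈ Set.Ioi (0:ℝ) := by
  have hms : MeasurableSet ((Set.Ioi (0:ℝ))ᶜ) := measurableSet_Ioi.compl
  rw [ae_iff]
  have : {z : ℝ | ¬ z ∈ Set.Ioi (0:ℝ)} = (Set.Ioi (0:ℝ))ᶜ := rfl
  rw [this, mulHaar, withDensity_apply _ hms, Measure.restrict_restrict hms,
    Set.compl_inter_self]
  simp

lemma lintegral_mulHaar (f : ℝ → ℝ≥0∞) (hf : Measurable f) :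
    ∫⁻ x, f x ∂mulHaar = ∫⁻ x in Set.Ioi (0:ℝ), f x * ENNReal.ofReal x⁻¹ := by
  rw [mulHaar, lintegral_withDensity_eq_lintegral_mul _
    (by exact measurable_inv.ennreal_ofReal) hf]
  simp only [Pi.mul_apply, mul_comm]

lemma lintegral_inv_Icc {c d : ℝ} (hc : 0 < c) (hcd : c ≤ d) :
    ∫⁻ x in Set.Icc c d, ENNReal.ofReal x⁻¹
      = ENNReal.ofReal (Real.log d - Real.log c) := by
  have hd : 0 < d := lt_of_lt_of_le hc hcd
  have hint : IntegrableOn (fun x : ℝ => x⁻¹) (Set.Icc c d) := by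
    apply ContinuousOn.integrableOn_compact isCompact_Icc
    exact ContinuousOn.inv₀ continuousOn_id fun x hx => ne_of_gt (lt_of_lt_of_le hc hx.1)
  have hnn : 0 ≤ᵐ[volume.restrict (Set.Icc c d)] fun x : ℝ => x⁻¹ := by
    filter_upwards [ae_restrict_mem measurableSet_Icc] with x hx
    exact inv_nonneg.2 (le_trans hc.le hx.1)
  rw [← ofReal_integral_eq_lintegral_ofReal hint hnn, integral_Icc_eq_integral_Ioc,
    ← intervalIntegral.integral_of_le hcd, integral_inv_of_pos hc hd,
    Real.log_div (ne_of_gt hd) (ne_of_gt hc)]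

lemma weight_lintegral_lt_top :
    ∫⁻ z, ENNReal.ofReal ((1 + |Real.log z|)⁻¹ ^ 2) ∂mulHaar < ⊤ := by
  have hmeas : Measurable fun z : ℝ => ENNReal.ofReal ((1 + |Real.log z|)⁻¹ ^ 2) :=
    (((measurable_const.add Real.measurable_log.abs).inv.pow_const 2)).ennreal_ofReal
  rw [lintegral_mulHaar _ hmeas]
  have himg : Set.Ioi (0:ℝ) = Real.exp '' Set.univ := by
    rw [Set.image_univ, Real.range_exp]
  rw [himg, lintegral_image_eq_lintegral_abs_det_fderiv_mul volume MeasurableSet.univ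
      (fun x _ => (Real.hasDerivAt_exp x).hasFDerivAt.hasFDerivWithinAt)
      (Real.exp_injective.injOn) _]
  simp only [ContinuousLinearMap.det_toSpanSingleton, Real.abs_exp, Real.log_exp, Measure.restrict_univ]
  have hpt : ∀ x : ℝ, ENNReal.ofReal (Real.exp x) *
      (ENNReal.ofReal ((1 + |x|)⁻¹ ^ 2) * ENNReal.ofReal (Real.exp x)⁻¹)
      = ENNReal.ofReal ((1 + |x|)⁻¹ ^ 2) := by
    intro x
    rw [mul_comm (ENNReal.ofReal ((1 + |x|)⁻¹ ^ 2)), ← mul_assoc,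
      ← ENNReal.ofReal_mul (Real.exp_pos x).le,
      mul_inv_cancel₀ (Real.exp_ne_zero x), ENNReal.ofReal_one, one_mul]
  simp only [hpt]
  calc ∫⁻ x : ℝ, ENNReal.ofReal ((1 + |x|)⁻¹ ^ 2)
      ≤ ∫⁻ x : ℝ, ENNReal.ofReal ((1 + x ^ 2)⁻¹) := by
        apply lintegral_mono fun x => ENNReal.ofReal_le_ofReal ?_
        rw [inv_pow]
        apply inv_anti₀ (by positivity)
        nlinarith [abs_nonneg x, sq_abs x]
    _ < ⊤ := by
        rw [← hasFiniteIntegral_iff_ofReal]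
        · exact integrable_inv_one_add_sq.hasFiniteIntegral
        · filter_upwards with x using by positivity

instance : SigmaFinite mulHaar := by
  rw [mulHaar]
  exact SigmaFinite.withDensity_of_ne_top' fun x => ENNReal.ofReal_ne_top

/-- The kernel `g(x/z)√(x/z)/(1+|log z|)` is square-integrable on `(0,∞)²` with respect to
`(dx/x)(dz/z)`; hence the corresponding operator `A` is Hilbert–Schmidt on `L²((0,∞),dx/x)`. -/
theorem stmt13 (g : ℝ → ℝ) (hmeas : Measurable g) (hbd : ∃ M, ∀ x, |g x| ≤ M)
    (hgc : HasCompactSupport g) (hgs : tsupport g ⊆ Set.Ioi 0) :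
    MemLp (fun p : ℝ × ℝ =>
        g (p.1 / p.2) * Real.sqrt (p.1 / p.2) / (1 + |Real.log p.2|))
      2 (mulHaar.prod mulHaar) := by
  obtain ⟨M, hM⟩ := hbd
  have hM0 : 0 ≤ M := le_trans (abs_nonneg _) (hM 0)
  obtain ⟨a, b, ha, hab, hg0⟩ :
      ∃ a b : ℝ, 0 < a ∧ a ≤ b ∧ ∀ t, t ∉ Set.Icc a b → g t = 0 := by
    rcases (tsupport g).eq_empty_or_nonempty with h | h
    · exact ⟨1, 1, one_pos, le_refl _,
        fun t _ => image_eq_zero_of_notMem_tsupport (by simp [h])⟩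
    · refine ⟨sInf (tsupport g), sSup (tsupport g), hgs (hgc.isCompact.sInf_mem h),
        csInf_le_csSup h hgc.isCompact.bddBelow hgc.isCompact.bddAbove, fun t ht => ?_⟩
      apply image_eq_zero_of_notMem_tsupport
      intro hts
      exact ht ⟨csInf_le hgc.isCompact.bddBelow hts, le_csSup hgc.isCompact.bddAbove hts⟩
  have hb : 0 < b := lt_of_lt_of_le ha hab
  set F : ℝ × ℝ → ℝ := fun p =>
    g (p.1 / p.2) * Real.sqrt (p.1 / p.2) / (1 + |Real.log p.2|) with hF
  have hdiv : Measurable fun p : ℝ × ℝ => p.1 / p.2 := measurable_fst.div measurable_snd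
  have hFm : Measurable F := by
    apply Measurable.div
    · exact (hmeas.comp hdiv).mul (Real.continuous_sqrt.measurable.comp hdiv)
    · exact measurable_const.add (Real.measurable_log.comp measurable_snd).abs
  set C : ℝ≥0∞ := ENNReal.ofReal (M ^ 2 * b) with hC
  set w : ℝ → ℝ≥0∞ := fun z => ENNReal.ofReal ((1 + |Real.log z|)⁻¹ ^ 2) with hw
  have hwm : Measurable w :=
    ((measurable_const.add Real.measurable_log.abs).inv.pow_const 2).ennreal_ofReal
  set ind : ℝ → ℝ≥0∞ := (Set.Icc a b).indicator (fun _ => (1 : ℝ≥0∞)) with hind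
  have hindm : Measurable ind := measurable_const.indicator measurableSet_Icc
  have hbound : ∀ p : ℝ × ℝ, (‖F p‖₊ : ℝ≥0∞) ^ (2 : ℝ) ≤ C * ind (p.1 / p.2) * w p.2 := by
    intro p
    by_cases hmem : p.1 / p.2 ∈ Set.Icc a b
    · have hden : (0:ℝ) < 1 + |Real.log p.2| := by positivity
      have habs : |F p| = |g (p.1 / p.2)| * Real.sqrt (p.1 / p.2) * (1 + |Real.log p.2|)⁻¹ := by
        rw [hF, abs_div, abs_mul, abs_of_nonneg (Real.sqrt_nonneg _), abs_of_pos hden,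
          div_eq_mul_inv]
      have h1 : |F p| ≤ M * Real.sqrt b * (1 + |Real.log p.2|)⁻¹ := by
        rw [habs]
        gcongr
        · exact hM _
        · exact hmem.2
      have h2 : |F p| ^ 2 ≤ M ^ 2 * b * ((1 + |Real.log p.2|)⁻¹ ^ 2) := by
        calc |F p| ^ 2 ≤ (M * Real.sqrt b * (1 + |Real.log p.2|)⁻¹) ^ 2 :=
              pow_le_pow_left₀ (abs_nonneg _) h1 2
          _ = M ^ 2 * Real.sqrt b ^ 2 * ((1 + |Real.log p.2|)⁻¹ ^ 2) := by ring
          _ = M ^ 2 * b * ((1 + |Real.log p.2|)⁻¹ ^ 2) := by rw [Real.sq_sqrt hb.le]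
      have hind1 : ind (p.1 / p.2) = 1 := by
        rw [hind, Set.indicator_of_mem hmem]
      have hrw : (‖F p‖₊ : ℝ≥0∞) ^ (2 : ℝ) = ENNReal.ofReal (|F p| ^ 2) := by
        rw [show ((2:ℝ)) = ((2:ℕ):ℝ) by norm_num, ENNReal.rpow_natCast,
          ← enorm_eq_nnnorm, Real.enorm_eq_ofReal_abs, ← ENNReal.ofReal_pow (abs_nonneg _)]
      rw [hrw, hind1, mul_one]
      calc ENNReal.ofReal (|F p| ^ 2)
          ≤ ENNReal.ofReal (M ^ 2 * b * ((1 + |Real.log p.2|)⁻¹ ^ 2)) :=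
            ENNReal.ofReal_le_ofReal h2
        _ = C * w p.2 := by rw [hC, hw, ENNReal.ofReal_mul (by positivity)]
    · have hz : F p = 0 := by
        rw [hF]
        simp [hg0 _ hmem]
      simp [hz, ENNReal.zero_rpow_of_pos (by norm_num : (0:ℝ) < 2)]
  refine ⟨hFm.aestronglyMeasurable, ?_⟩
  rw [eLpNorm_eq_lintegral_rpow_enorm_toReal (by norm_num) (by norm_num)]
  simp only [ENNReal.toReal_ofNat]
  apply ENNReal.rpow_lt_top_of_nonneg (by norm_num)
  apply ne_of_lt
  have hbm : Measurable fun p : ℝ × ℝ => C * ind (p.1 / p.2) * w p.2 :=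
    (measurable_const.mul (hindm.comp hdiv)).mul (hwm.comp measurable_snd)
  calc ∫⁻ p, (‖F p‖₊ : ℝ≥0∞) ^ (2 : ℝ) ∂(mulHaar.prod mulHaar)
      ≤ ∫⁻ p, C * ind (p.1 / p.2) * w p.2 ∂(mulHaar.prod mulHaar) := lintegral_mono hbound
    _ = ∫⁻ z, ∫⁻ x, C * ind (x / z) * w z ∂mulHaar ∂mulHaar :=
        lintegral_prod_symm' _ hbm
    _ = ∫⁻ z, C * ENNReal.ofReal (Real.log b - Real.log a) * w z ∂mulHaar := by
        apply lintegral_congr_ae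
        filter_upwards [mulHaar_ae_Ioi] with z hz
        have hz' : (0:ℝ) < z := hz
        have hiz : Measurable fun x : ℝ => ind (x / z) := hindm.comp (measurable_id.div_const z)
        have hre : (fun x : ℝ => C * ind (x / z) * w z) = fun x => (C * w z) * ind (x / z) := by
          funext x; ring
        rw [hre, lintegral_const_mul _ hiz]
        have hsetind : ∀ x : ℝ, ind (x / z)
            = (Set.Icc (a * z) (b * z)).indicator (fun _ => (1 : ℝ≥0∞)) x := by
          intro x
          have hiff : x / z ∈ Set.Icc a b ↔ x ∈ Set.Icc (a * z) (b * z) := by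
            rw [Set.mem_Icc, Set.mem_Icc, le_div_iff₀ hz', div_le_iff₀ hz']
          by_cases hx : x / z ∈ Set.Icc a b
          · rw [hind, Set.indicator_of_mem hx, Set.indicator_of_mem (hiff.mp hx)]
          · rw [hind, Set.indicator_of_notMem hx,
              Set.indicator_of_notMem (fun hc => hx (hiff.mpr hc))]
        have hcompute : ∫⁻ x, ind (x / z) ∂mulHaar
            = ENNReal.ofReal (Real.log b - Real.log a) := by
          rw [lintegral_mulHaar _ hiz]
          have hptw : ∀ x : ℝ, ind (x / z) * ENNReal.ofReal x⁻¹
              = (Set.Icc (a * z) (b * z)).indicator (fun x => ENNReal.ofReal x⁻¹) x := by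
            intro x
            rw [hsetind x]
            by_cases hx : x ∈ Set.Icc (a * z) (b * z)
            · simp [hx]
            · simp [hx]
          simp only [hptw]
          rw [lintegral_indicator measurableSet_Icc, Measure.restrict_restrict measurableSet_Icc]
          have hss : Set.Icc (a * z) (b * z) ∩ Set.Ioi 0 = Set.Icc (a * z) (b * z) :=
            Set.inter_eq_self_of_subset_left fun x hx =>
              lt_of_lt_of_le (mul_pos ha hz') hx.1
          rw [hss, lintegral_inv_Icc (mul_pos ha hz') (by nlinarith),
            Real.log_mul hb.ne' hz'.ne', Real.log_mul ha.ne' hz'.ne']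
          ring_nf
        rw [hcompute]
        ring
    _ = C * ENNReal.ofReal (Real.log b - Real.log a) * ∫⁻ z, w z ∂mulHaar :=
        lintegral_const_mul _ hwm
    _ < ⊤ := ENNReal.mul_lt_top (by finiteness) weight_lintegral_lt_top
end
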